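/- Let K be a valuation field whose value group K^×/O_K^× is isomorphic, as a linearly ordered abelian group, to (ℝ, +, ≤); equivalently, there is a multiplicative ultrametric valuation v : K → ℝ≥0 with valuation ring O_K and v(K^×) = ℝ_{>0}. Then every torsion-free O_K-module M of rank 1 is isomorphic, as an O_K-module, to exactly one of the three O_K-modules K, O_K, m_K; in particular, no two of K, O_K, m_K are isomorphic as O_K-modules. -/

import Mathlib

open TensorProduct

section St3Aux

variable {K : Type*} [Field K] {OK : ValuationSubring K} {v : Valuation K NNReal}


theorem st3_aux_unit (hv : ∀ x : K, v x ≤ 1 ↔ x ∈ OK) (r : ↥OK) :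
    IsUnit r ↔ v (r : K) = 1 := by
  constructor
  · intro hu
    obtain ⟨s, hs⟩ := isUnit_iff_exists.mp hu
    have h1 : (r : K) * (s : K) = 1 := by
      have := hs.1
      calc (r : K) * (s : K) = ((r * s : ↥OK) : K) := by push_cast; ring
        _ = 1 := by rw [this]; rfl
    have h2 : v (r : K) * v (s : K) = 1 := by
      rw [← v.map_mul, h1, v.map_one]
    have hle1 : v (r : K) ≤ 1 := (hv _).mpr r.2
    have hle2 : v (s : K) ≤ 1 := (hv _).mpr s.2
    refine le_antisymm hle1 ?_
    calc (1 : NNReal) = v (r : K) * v (s : K) := h2.symm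
      _ ≤ v (r : K) * 1 := by gcongr
      _ = v (r : K) := mul_one _
  · intro h1
    have hr0 : (r : K) ≠ 0 := by
      intro h; rw [h, v.map_zero] at h1; exact zero_ne_one h1
    have hinv : (r : K)⁻¹ ∈ OK := by
      rw [← hv, map_inv₀, h1]; norm_num
    refine isUnit_iff_exists.mpr ⟨⟨(r : K)⁻¹, hinv⟩, ?_, ?_⟩
    · ext; push_cast; exact mul_inv_cancel₀ hr0
    · ext; push_cast; exact inv_mul_cancel₀ hr0

theorem st3_aux_mem (hv : ∀ x : K, v x ≤ 1 ↔ x ∈ OK) (r : ↥OK) :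
    r ∈ IsLocalRing.maximalIdeal ↥OK ↔ v (r : K) < 1 := by
  rw [IsLocalRing.mem_maximalIdeal, mem_nonunits_iff, st3_aux_unit hv]
  have := (hv (r : K)).mpr r.2
  exact ⟨fun h => lt_of_le_of_ne this h, fun h => ne_of_lt h⟩

theorem st3_nzsmul : NoZeroSMulDivisors ↥OK K := by
  constructor
  intro r x h
  have : (r : K) * x = 0 := h
  rcases mul_eq_zero.mp this with h1 | h2
  · left; exact Subtype.ext h1
  · right; exact h2

theorem st3_not_K_OK (hv : ∀ x : K, v x ≤ 1 ↔ x ∈ OK)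
    (hsurj : ∀ r : NNReal, 0 < r → ∃ x : K, x ≠ 0 ∧ v x = r) :
    ¬ Nonempty (K ≃ₗ[↥OK] ↥OK) := by
  rintro ⟨e⟩
  obtain ⟨x, hx0, hxv⟩ := hsurj (1/2) (by norm_num)
  have hxOK : x ∈ OK := (hv x).mp (by rw [hxv]; norm_num)
  set r : ↥OK := ⟨x, hxOK⟩ with hr
  have hsm : r • (x⁻¹ * (e.symm 1 : K)) = e.symm 1 := by
    show x * (x⁻¹ * _) = _
    field_simp
  have key : r * e (x⁻¹ * (e.symm 1 : K)) = 1 := by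
    calc r * e (x⁻¹ * (e.symm 1 : K)) = r • e (x⁻¹ * (e.symm 1 : K)) := rfl
      _ = e (r • (x⁻¹ * (e.symm 1 : K))) := (e.map_smul _ _).symm
      _ = e (e.symm 1) := by rw [hsm]
      _ = 1 := e.apply_symm_apply 1
  have hu : IsUnit r := IsUnit.of_mul_eq_one _ key
  have h1 := (st3_aux_unit hv r).mp hu
  rw [show ((r : K)) = x from rfl, hxv] at h1
  norm_num at h1

theorem st3_not_K_m (hv : ∀ x : K, v x ≤ 1 ↔ x ∈ OK)
    (hsurj : ∀ r : NNReal, 0 < r → ∃ x : K, x ≠ 0 ∧ v x = r) :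
    ¬ Nonempty (K ≃ₗ[↥OK] ↥(IsLocalRing.maximalIdeal ↥OK)) := by
  rintro ⟨e⟩
  obtain ⟨x, hx0, hxv⟩ := hsurj (1/2) (by norm_num)
  have hxOK : x ∈ OK := (hv x).mp (by rw [hxv]; norm_num)
  obtain ⟨t, ht0, htv⟩ := hsurj (3/4) (by norm_num)
  have htOK : t ∈ OK := (hv t).mp
    (by rw [htv, ← NNReal.coe_le_coe]; push_cast; norm_num)
  have htm : (⟨t, htOK⟩ : ↥OK) ∈ IsLocalRing.maximalIdeal ↥OK := by
    rw [st3_aux_mem hv]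
    show v t < 1
    rw [htv, ← NNReal.coe_lt_coe]; push_cast; norm_num
  set tm : ↥(IsLocalRing.maximalIdeal ↥OK) := ⟨⟨t, htOK⟩, htm⟩ with htmdef
  set r : ↥OK := ⟨x, hxOK⟩ with hr
  set z := e (x⁻¹ * (e.symm tm : K)) with hz
  have hsm : r • (x⁻¹ * (e.symm tm : K)) = (e.symm tm : K) := by
    show x * (x⁻¹ * _) = _
    field_simp
  have key : r • z = tm := by
    rw [hz, ← e.map_smul, hsm, e.apply_symm_apply]
  have hcoe : (((r • z : ↥(IsLocalRing.maximalIdeal ↥OK)) : ↥OK) : K)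
      = x * ((z : ↥OK) : K) := rfl
  have hvt : v t = v x * v ((z : ↥OK) : K) := by
    rw [← v.map_mul, ← hcoe, key]
  have hle : v ((z : ↥OK) : K) ≤ 1 := (hv _).mpr (z : ↥OK).2
  rw [htv, hxv] at hvt
  have : (3/4 : NNReal) ≤ 1/2 := by
    rw [hvt]
    calc (1/2 : NNReal) * v ((z : ↥OK) : K) ≤ 1/2 * 1 := by gcongr
      _ = 1/2 := mul_one _
  have h2 : ¬ ((3/4 : NNReal) ≤ 1/2) := by
    rw [← NNReal.coe_le_coe]; push_cast; norm_num
  exact h2 this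

theorem st3_not_OK_m (hv : ∀ x : K, v x ≤ 1 ↔ x ∈ OK)
    (hsurj : ∀ r : NNReal, 0 < r → ∃ x : K, x ≠ 0 ∧ v x = r) :
    ¬ Nonempty ((↥OK) ≃ₗ[↥OK] ↥(IsLocalRing.maximalIdeal ↥OK)) := by
  rintro ⟨e⟩
  set g := e 1 with hg
  set a := v ((g : ↥OK) : K) with ha
  have hga : a < 1 := (st3_aux_mem hv _).mp g.2
  have hmid0 : (0 : NNReal) < (a + 1) / 2 := by
    rw [← NNReal.coe_lt_coe]; push_cast; positivity
  obtain ⟨t, ht0, htv⟩ := hsurj ((a + 1) / 2) hmid0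
  have hmid1 : (a + 1) / 2 < 1 := by
    rw [← NNReal.coe_lt_coe] at *; push_cast at *; linarith
  have hmida : a < (a + 1) / 2 := by
    have hga' := hga
    rw [← NNReal.coe_lt_coe] at *; push_cast at *; linarith
  have htOK : t ∈ OK := (hv t).mp (by rw [htv]; exact hmid1.le)
  have htm : (⟨t, htOK⟩ : ↥OK) ∈ IsLocalRing.maximalIdeal ↥OK := by
    rw [st3_aux_mem hv]; show v t < 1; rw [htv]; exact hmid1
  set tm : ↥(IsLocalRing.maximalIdeal ↥OK) := ⟨⟨t, htOK⟩, htm⟩ with htmdef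
  have key : tm = (e.symm tm) • g := by
    rw [hg, ← e.map_smul, smul_eq_mul, mul_one, e.apply_symm_apply]
  have hcoe : (((e.symm tm • g : ↥(IsLocalRing.maximalIdeal ↥OK)) : ↥OK) : K)
      = ((e.symm tm : ↥OK) : K) * ((g : ↥OK) : K) := rfl
  have hvt : v t = v ((e.symm tm : ↥OK) : K) * a := by
    conv_lhs => rw [show (t : K) = (((tm : ↥OK)) : K) from rfl, key]
    rw [hcoe, v.map_mul]
  have hle : v ((e.symm tm : ↥OK) : K) ≤ 1 := (hv _).mpr (e.symm tm).2
  have : v t ≤ a := by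
    rw [hvt]
    calc v ((e.symm tm : ↥OK) : K) * a ≤ 1 * a := by gcongr
      _ = a := one_mul _
  rw [htv] at this
  exact absurd this (not_le.mpr hmida)


theorem st3_classify (hv : ∀ x : K, v x ≤ 1 ↔ x ∈ OK)
    (hsurj : ∀ r : NNReal, 0 < r → ∃ x : K, x ≠ 0 ∧ v x = r)
    (N : Submodule ↥OK K) (hN : N ≠ ⊥) :
    Nonempty (↥N ≃ₗ[↥OK] K) ∨ Nonempty (↥N ≃ₗ[↥OK] ↥OK) ∨
      Nonempty (↥N ≃ₗ[↥OK] ↥(IsLocalRing.maximalIdeal ↥OK)) := by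
  haveI : NoZeroSMulDivisors ↥OK K := st3_nzsmul
  have hdc : ∀ x ∈ N, ∀ y : K, v y ≤ v x → y ∈ N := by
    intro x hx y hle
    rcases eq_or_ne x 0 with rfl | hx0
    · have h0 : v y = 0 := le_antisymm (by simpa using hle) (zero_le)
      rw [v.zero_iff.mp h0]
      exact N.zero_mem
    · have hpos : 0 < v x := pos_iff_ne_zero.mpr (by rwa [Ne, v.zero_iff])
      have hmem : y * x⁻¹ ∈ OK := by
        rw [← hv, v.map_mul, map_inv₀, ← div_eq_mul_inv, div_le_one hpos]
        exact hle
      have heq : (⟨y * x⁻¹, hmem⟩ : ↥OK) • x = y := by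
        show y * x⁻¹ * x = y
        field_simp
      rw [← heq]; exact N.smul_mem _ hx
  by_cases hb : ∃ b : NNReal, ∀ x ∈ N, v x ≤ b
  · obtain ⟨b, hbb⟩ := hb
    obtain ⟨x₀, hx₀N, hx₀⟩ := Submodule.exists_mem_ne_zero_of_ne_bot hN
    set S : Set NNReal := v '' (N : Set K) with hS
    have hSne : S.Nonempty := ⟨v x₀, ⟨x₀, hx₀N, rfl⟩⟩
    have hSbdd : BddAbove S := ⟨b, by rintro c ⟨x, hx, rfl⟩; exact hbb x hx⟩
    set B := sSup S with hB
    have hle : ∀ x ∈ N, v x ≤ B := fun x hx => le_csSup hSbdd ⟨x, hx, rfl⟩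
    have hBpos : 0 < B :=
      lt_of_lt_of_le (pos_iff_ne_zero.mpr (by rwa [Ne, v.zero_iff])) (hle x₀ hx₀N)
    by_cases hach : ∃ z ∈ N, v z = B
    · obtain ⟨z, hzN, hzB⟩ := hach
      have hz0 : z ≠ 0 := by
        intro h; rw [h, v.map_zero] at hzB; exact hBpos.ne hzB
      have hEq : N = (↥OK ∙ z) := by
        apply le_antisymm
        · intro x hx
          rw [Submodule.mem_span_singleton]
          have hzpos : 0 < v z := by rw [hzB]; exact hBpos
          have hmem : x * z⁻¹ ∈ OK := by
            rw [← hv, v.map_mul, map_inv₀, ← div_eq_mul_inv, div_le_one hzpos, hzB]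
            exact hle x hx
          exact ⟨⟨x * z⁻¹, hmem⟩, by show x * z⁻¹ * z = x; field_simp⟩
        · rw [Submodule.span_le, Set.singleton_subset_iff]; exact hzN
      exact Or.inr (Or.inl ⟨(LinearEquiv.ofEq _ _ hEq).trans
        (LinearEquiv.toSpanNonzeroSingleton ↥OK K z hz0).symm⟩)
    · push_neg at hach
      have hlt : ∀ x ∈ N, v x < B := fun x hx => lt_of_le_of_ne (hle x hx) (hach x hx)
      have hmem' : ∀ y : K, v y < B → y ∈ N := by
        intro y hy
        obtain ⟨c, ⟨x, hxN, rfl⟩, hyc⟩ := exists_lt_of_lt_csSup hSne hy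
        exact hdc x hxN y hyc.le
      obtain ⟨z, hz0, hzB⟩ := hsurj B hBpos
      have hzmem : ∀ r : ↥(IsLocalRing.maximalIdeal ↥OK), z * ((r : ↥OK) : K) ∈ N := by
        intro r
        apply hmem'
        rw [v.map_mul, hzB]
        exact mul_lt_of_lt_one_right hBpos ((st3_aux_mem hv _).mp r.2)
      set f : ↥(IsLocalRing.maximalIdeal ↥OK) →ₗ[↥OK] ↥N :=
        { toFun := fun r => ⟨z * ((r : ↥OK) : K), hzmem r⟩
          map_add' := by intro r s; ext; push_cast; ring
          map_smul' := by
            intro c r; ext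
            show z * ((c • (r : ↥OK) : ↥OK) : K) = (c : K) * (z * ((r : ↥OK) : K))
            rw [smul_eq_mul]
            push_cast
            ring } with hf
      have hfbij : Function.Bijective f := by
        constructor
        · intro r s h
          have h1 : z * ((r : ↥OK) : K) = z * ((s : ↥OK) : K) := congrArg Subtype.val h
          have h2 := mul_left_cancel₀ hz0 h1
          ext
          exact h2
        · rintro ⟨x, hxN⟩
          have hxB : v x < B := hlt x hxN
          have h1 : v (z⁻¹ * x) < 1 := by
            rw [v.map_mul, map_inv₀, hzB, ← NNReal.coe_lt_coe] at *
            push_cast at *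
            rw [inv_mul_lt_one₀ hBpos] <;> assumption
          have hOK : z⁻¹ * x ∈ OK := (hv _).mp h1.le
          refine ⟨⟨⟨z⁻¹ * x, hOK⟩, (st3_aux_mem hv _).mpr h1⟩, ?_⟩
          ext
          show z * (z⁻¹ * x) = x
          field_simp
      exact Or.inr (Or.inr ⟨(LinearEquiv.ofBijective f hfbij).symm⟩)
  · push_neg at hb
    have htop : N = ⊤ := by
      rw [Submodule.eq_top_iff']
      intro y
      obtain ⟨x, hxN, hgt⟩ := hb (v y)
      exact hdc x hxN y hgt.le
    exact Or.inl ⟨LinearEquiv.ofTop N htop⟩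


end St3Aux

/-- Let `K` be a valuation field whose value group is isomorphic to `(ℝ,+,≤)`;
equivalently, there is a multiplicative ultrametric valuation `v : K → ℝ≥0` with valuation ring
`O_K` and `v(K^×) = ℝ_{>0}`.  Then every torsion-free `O_K`-module `M` of rank `1` is isomorphic,
as an `O_K`-module, to exactly one of `K`, `O_K`, `m_K`; in particular, no two of `K`, `O_K`,
`m_K` are isomorphic as `O_K`-modules. -/
theorem statement3 (K : Type*) [Field K] (OK : ValuationSubring K)
    (v : Valuation K NNReal) (hv : ∀ x : K, v x ≤ 1 ↔ x ∈ OK)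
    (hsurj : ∀ r : NNReal, 0 < r → ∃ x : K, x ≠ 0 ∧ v x = r)
    (M : Type*) [AddCommGroup M] [Module ↥OK M]
    (htf : ∀ (r : ↥OK) (x : M), r • x = 0 → r = 0 ∨ x = 0)
    (hrank : Module.rank K (K ⊗[↥OK] M) = 1) :
    ((Nonempty (M ≃ₗ[↥OK] K) ∨ Nonempty (M ≃ₗ[↥OK] ↥OK) ∨
        Nonempty (M ≃ₗ[↥OK] ↥(IsLocalRing.maximalIdeal ↥OK))) ∧
      ¬ (Nonempty (M ≃ₗ[↥OK] K) ∧ Nonempty (M ≃ₗ[↥OK] ↥OK)) ∧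
      ¬ (Nonempty (M ≃ₗ[↥OK] K) ∧
          Nonempty (M ≃ₗ[↥OK] ↥(IsLocalRing.maximalIdeal ↥OK))) ∧
      ¬ (Nonempty (M ≃ₗ[↥OK] ↥OK) ∧
          Nonempty (M ≃ₗ[↥OK] ↥(IsLocalRing.maximalIdeal ↥OK)))) ∧
    (¬ Nonempty (K ≃ₗ[↥OK] ↥OK) ∧
      ¬ Nonempty (K ≃ₗ[↥OK] ↥(IsLocalRing.maximalIdeal ↥OK)) ∧
      ¬ Nonempty ((↥OK) ≃ₗ[↥OK] ↥(IsLocalRing.maximalIdeal ↥OK))) := by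
  have hKO := st3_not_K_OK hv hsurj
  have hKm := st3_not_K_m hv hsurj
  have hOm := st3_not_OK_m hv hsurj
  -- torsion-freeness
  haveI htfM : NoZeroSMulDivisors ↥OK M := ⟨fun {r x} h => htf r x h⟩
  -- M is nontrivial
  haveI hMnt : Nontrivial M := by
    rcases subsingleton_or_nontrivial M with hss | hnt
    · exfalso
      haveI : Subsingleton (K ⊗[↥OK] M) := by
        constructor
        intro a b
        have h : ∀ t : K ⊗[↥OK] M, t = 0 := by
          intro t
          induction t using TensorProduct.induction_on with
          | zero => rfl
          | tmul k m => rw [Subsingleton.elim m 0, tmul_zero]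
          | add a b ha hb => rw [ha, hb, add_zero]
        rw [h a, h b]
      rw [rank_subsingleton' K (K ⊗[↥OK] M)] at hrank
      exact zero_ne_one hrank
    · exact hnt
  -- the localization map into the tensor product
  set ψ : M →ₗ[↥OK] K ⊗[↥OK] M := TensorProduct.mk ↥OK K M 1 with hψ
  haveI hloc : IsLocalizedModule (nonZeroDivisors ↥OK) ψ :=
    (isLocalizedModule_iff_isBaseChange (nonZeroDivisors ↥OK) K ψ).mpr
      (TensorProduct.isBaseChange ↥OK M K)
  have hψinj : Function.Injective ψ := by
    intro a b h
    have h0 : ψ (a - b) = 0 := by rw [map_sub, h, sub_self]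
    obtain ⟨s, hs⟩ := (IsLocalizedModule.eq_zero_iff (nonZeroDivisors ↥OK) ψ).mp h0
    have hs0 : (s : ↥OK) ≠ 0 := nonZeroDivisors.coe_ne_zero s
    rcases htf s (a - b) hs with h1 | h2
    · exact absurd h1 hs0
    · exact sub_eq_zero.mp h2
  -- K ⊗ M ≃ K
  haveI : Module.Free K (K ⊗[↥OK] M) := Module.Free.of_divisionRing K _
  obtain ⟨g⟩ : Nonempty ((K ⊗[↥OK] M) ≃ₗ[K] K) := by
    apply nonempty_linearEquiv_of_lift_rank_eq
    rw [hrank, Module.rank_self]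
    simp
  set φ : M →ₗ[↥OK] K := (g.restrictScalars ↥OK).toLinearMap.comp ψ with hφ
  have hφinj : Function.Injective φ := by
    intro a b h
    exact hψinj ((g.restrictScalars ↥OK).injective.eq_iff.mp h)
  set N : Submodule ↥OK K := LinearMap.range φ with hNdef
  have e0 : M ≃ₗ[↥OK] ↥N := LinearEquiv.ofInjective φ hφinj
  have hN : N ≠ ⊥ := by
    obtain ⟨m, hm⟩ := exists_ne (0 : M)
    refine (Submodule.ne_bot_iff N).mpr ⟨φ m, LinearMap.mem_range_self φ m, ?_⟩
    intro h
    exact hm (hφinj (h.trans (map_zero φ).symm))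
  have hclass := st3_classify hv hsurj N hN
  refine ⟨⟨?_, ?_, ?_, ?_⟩, hKO, hKm, hOm⟩
  · rcases hclass with h | h | h
    · obtain ⟨e⟩ := h; exact Or.inl ⟨e0.trans e⟩
    · obtain ⟨e⟩ := h; exact Or.inr (Or.inl ⟨e0.trans e⟩)
    · obtain ⟨e⟩ := h; exact Or.inr (Or.inr ⟨e0.trans e⟩)
  · rintro ⟨⟨e1⟩, ⟨e2⟩⟩; exact hKO ⟨e1.symm.trans e2⟩
  · rintro ⟨⟨e1⟩, ⟨e2⟩⟩; exact hKm ⟨e1.symm.trans e2⟩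
  · rintro ⟨⟨e1⟩, ⟨e2⟩⟩; exact hOm ⟨e1.symm.trans e2⟩
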